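/- Let n ≥ 1 be an integer, p > 1, q ∈ (0,1), and A ∈ (0,1). Suppose u : ℝⁿ × [0,∞) → ℝ is bounded and continuous, is C^{2,1} on ℝⁿ × (0,∞) (continuous time derivative and continuous spatial derivatives up to order two), satisfies ∂_t u = Δu + |u|^{p−1}u − |u|^{q−1}u on ℝⁿ × (0,∞), and |u(x,0)| ≤ A for all x ∈ ℝⁿ. Then there exists T > 0 such that u(x,t) = 0 for all x ∈ ℝⁿ and all t ≥ T (finite time extinction). -/

import Mathlib

open Filter Set Topology

/-- The Laplacian of `f : ℝⁿ → ℝ` at `x`: the sum of the second partial derivatives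
`∂²f/∂xᵢ²` in the coordinate directions. -/
noncomputable def laplacian {n : ℕ} (f : EuclideanSpace ℝ (Fin n) → ℝ)
    (x : EuclideanSpace ℝ (Fin n)) : ℝ :=
  ∑ i : Fin n,
    fderiv ℝ (fun y => fderiv ℝ f y (EuclideanSpace.single i 1)) x (EuclideanSpace.single i 1)

lemma secondDeriv_nonpos_of_isLocalMax {g g1 : ℝ → ℝ} {c : ℝ}
    (hg : ∀ s, HasDerivAt g (g1 s) s) (hg1 : HasDerivAt g1 c 0)
    (hmax : IsLocalMax g 0) : c ≤ 0 := by
  by_contra hc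
  push_neg at hc
  have h0 : g1 0 = 0 := by
    have := hmax.deriv_eq_zero
    rwa [(hg 0).deriv] at this
  have hslope : Tendsto (slope g1 0) (𝓝[≠] (0:ℝ)) (𝓝 c) :=
    hasDerivAt_iff_tendsto_slope.1 hg1
  have hs : ∀ᶠ s in 𝓝[>] (0:ℝ), 0 < g1 s := by
    have h1 : ∀ᶠ s in 𝓝[>] (0:ℝ), 0 < slope g1 0 s :=
      (hslope.mono_left (nhdsWithin_mono _ fun s hs => ne_of_gt hs)).eventually
        (eventually_gt_nhds hc)
    filter_upwards [h1, self_mem_nhdsWithin] with s h2 h3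
    have : slope g1 0 s = g1 s / s := by simp [slope_def_field, h0]
    rw [this] at h2
    exact (div_pos_iff.1 h2).elim (fun h => h.1) (fun h => absurd h.2 (not_lt.2 (le_of_lt h3)))
  obtain ⟨δ, hδ, hδ'⟩ := mem_nhdsGT_iff_exists_Ioo_subset.1 hs
  have hδ0 : 0 < δ := hδ
  obtain ⟨ν, hν, hν'⟩ := Metric.eventually_nhds_iff.1 hmax
  set s₀ := min δ ν / 2 with hs₀
  have hs₀pos : 0 < s₀ := by positivity
  have hs₀δ : s₀ < δ := by
    have := min_le_left δ ν; simp only [hs₀]; linarith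
  have hs₀ν : s₀ < ν := by
    have := min_le_right δ ν; simp only [hs₀]; linarith
  have hmono : StrictMonoOn g (Icc 0 s₀) := by
    apply strictMonoOn_of_deriv_pos (convex_Icc 0 s₀)
    · exact fun s _ => (hg s).continuousAt.continuousWithinAt
    · intro s hsm
      rw [interior_Icc] at hsm
      rw [(hg s).deriv]
      exact hδ' ⟨hsm.1, lt_trans hsm.2 hs₀δ⟩
  have hlt : g 0 < g s₀ :=
    hmono (left_mem_Icc.2 hs₀pos.le) (right_mem_Icc.2 hs₀pos.le) hs₀pos
  have : g s₀ ≤ g 0 := hν' (by simp [abs_of_pos hs₀pos, hs₀ν])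
  linarith

lemma laplacian_nonpos_of_isLocalMax {n : ℕ} {f : EuclideanSpace ℝ (Fin n) → ℝ}
    (hf : ContDiff ℝ 2 f) {x₀ : EuclideanSpace ℝ (Fin n)} (hmax : IsLocalMax f x₀) :
    laplacian f x₀ ≤ 0 := by
  apply Finset.sum_nonpos
  intro i _
  set e := EuclideanSpace.single i (1:ℝ) with he
  set G : EuclideanSpace ℝ (Fin n) → ℝ := fun y => fderiv ℝ f y e with hGdef
  have hG : ContDiff ℝ 1 G :=
    (hf.fderiv_right (by norm_num)).clm_apply contDiff_const
  set ℓ : ℝ → EuclideanSpace ℝ (Fin n) := fun s => x₀ + s • e with hℓdef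
  have hℓ : ∀ s, HasDerivAt ℓ e s := by
    intro s
    have : HasDerivAt (fun s : ℝ => s • e) ((1:ℝ) • e) s :=
      (hasDerivAt_id s).smul_const e
    simpa only [one_smul] using this.const_add x₀
  have hℓ0 : ℓ 0 = x₀ := by simp [hℓdef]
  set g : ℝ → ℝ := fun s => f (ℓ s) with hgdef
  set g1 : ℝ → ℝ := fun s => G (ℓ s) with hg1def
  have hg : ∀ s, HasDerivAt g (g1 s) s := by
    intro s
    exact ((hf.differentiable (by norm_num) (ℓ s)).hasFDerivAt).comp_hasDerivAt s (hℓ s)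
  have hg1 : HasDerivAt g1 (fderiv ℝ G x₀ e) 0 := by
    have := ((hG.differentiable (by norm_num) (ℓ 0)).hasFDerivAt).comp_hasDerivAt 0 (hℓ 0)
    rwa [hℓ0] at this
  have hmaxg : IsLocalMax g 0 := by
    have hc : Filter.Tendsto ℓ (𝓝 0) (𝓝 x₀) := by
      rw [← hℓ0]; exact (hℓ 0).continuousAt.tendsto
    have h2 := hc.eventually hmax
    unfold g
    unfold IsLocalMax IsMaxFilter
    simpa [hℓ0] using h2
  exact secondDeriv_nonpos_of_isLocalMax hg hg1 hmaxg

lemma laplacian_neg {n : ℕ} (f : EuclideanSpace ℝ (Fin n) → ℝ) (x : EuclideanSpace ℝ (Fin n)) :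
    laplacian (fun y => -f y) x = -laplacian f x := by
  unfold laplacian
  rw [← Finset.sum_neg_distrib]
  refine Finset.sum_congr rfl fun i _ => ?_
  have h1 : (fun y => fderiv ℝ (fun z => -f z) y (EuclideanSpace.single i 1))
      = fun y => -(fderiv ℝ f y (EuclideanSpace.single i 1)) := by
    funext y; rw [fderiv_fun_neg]; rfl
  rw [h1, fderiv_fun_neg]; rfl

lemma contDiff_fderiv_apply {n : ℕ} {f : EuclideanSpace ℝ (Fin n) → ℝ}
    (hf : ContDiff ℝ 2 f) (v : EuclideanSpace ℝ (Fin n)) :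
    ContDiff ℝ 1 (fun y => fderiv ℝ f y v) :=
  (hf.fderiv_right (by norm_num)).clm_apply contDiff_const

lemma laplacian_sub {n : ℕ} {f g : EuclideanSpace ℝ (Fin n) → ℝ}
    (hf : ContDiff ℝ 2 f) (hg : ContDiff ℝ 2 g) (x : EuclideanSpace ℝ (Fin n)) :
    laplacian (fun y => f y - g y) x = laplacian f x - laplacian g x := by
  unfold laplacian
  rw [← Finset.sum_sub_distrib]
  refine Finset.sum_congr rfl fun i _ => ?_
  set e := EuclideanSpace.single i (1:ℝ)
  have h1 : (fun y => fderiv ℝ (fun z => f z - g z) y e)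
      = fun y => fderiv ℝ f y e - fderiv ℝ g y e := by
    funext y
    rw [fderiv_fun_sub (hf.differentiable (by norm_num) y) (hg.differentiable (by norm_num) y)]
    rfl
  rw [h1, fderiv_fun_sub ((contDiff_fderiv_apply hf e).differentiable (by norm_num) x)
    ((contDiff_fderiv_apply hg e).differentiable (by norm_num) x)]
  rfl

lemma laplacian_const_mul {n : ℕ} {g : EuclideanSpace ℝ (Fin n) → ℝ} (K : ℝ)
    (hg : ContDiff ℝ 2 g) (x : EuclideanSpace ℝ (Fin n)) :
    laplacian (fun y => K * g y) x = K * laplacian g x := by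
  unfold laplacian
  rw [Finset.mul_sum]
  refine Finset.sum_congr rfl fun i _ => ?_
  set e := EuclideanSpace.single i (1:ℝ)
  have h1 : (fun y => fderiv ℝ (fun z => K * g z) y e)
      = fun y => K * fderiv ℝ g y e := by
    funext y
    rw [fderiv_const_mul (hg.differentiable (by norm_num) y)]
    rfl
  rw [h1, fderiv_const_mul ((contDiff_fderiv_apply hg e).differentiable (by norm_num) x)]
  rfl

lemma laplacian_normSq {n : ℕ} (x : EuclideanSpace ℝ (Fin n)) :
    laplacian (fun y : EuclideanSpace ℝ (Fin n) => ‖y‖^2) x = 2 * n := by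
  unfold laplacian
  have : ∀ i : Fin n,
      fderiv ℝ (fun y => fderiv ℝ (fun z : EuclideanSpace ℝ (Fin n) => ‖z‖^2) y
        (EuclideanSpace.single i 1)) x (EuclideanSpace.single i 1) = 2 := by
    intro i
    set e := EuclideanSpace.single i (1:ℝ) with he
    have h1 : (fun y => fderiv ℝ (fun z : EuclideanSpace ℝ (Fin n) => ‖z‖^2) y e)
        = fun y => (2 • (innerSL ℝ e)) y := by
      funext y
      rw [(hasStrictFDerivAt_norm_sq y).hasFDerivAt.fderiv]
      simp [real_inner_comm]
    rw [h1, (2 • (innerSL ℝ e)).fderiv]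
    have : ‖e‖ = 1 := by simp [he, EuclideanSpace.norm_single]
    have h2 : ∑ j : Fin n, e j * e j = 1 := by
      simp [he, EuclideanSpace.single_apply]
    simp [h2]
    exact Or.inl this
  rw [Finset.sum_congr rfl fun i _ => this i]
  simp [Finset.card_univ]
  ring

noncomputable def hbar (q A b t : ℝ) : ℝ := (max 0 (A ^ (1-q) - b * t)) ^ (1/(1-q))

section Barrier
variable {q A b : ℝ}

lemma hbar_nonneg (t : ℝ) : 0 ≤ hbar q A b t := Real.rpow_nonneg (le_max_left _ _) _

lemma hbar_le (hq1 : q < 1) (hA0 : 0 < A) (hb : 0 < b) {t : ℝ} (ht : 0 ≤ t) :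
    hbar q A b t ≤ A := by
  have h1 : max 0 (A ^ (1-q) - b * t) ≤ A ^ (1-q) := by
    have h3 : 0 ≤ b * t := mul_nonneg hb.le ht
    have h2 : 0 ≤ A ^ (1-q) := Real.rpow_nonneg hA0.le _
    rw [max_le_iff]; constructor <;> linarith
  calc hbar q A b t ≤ (A ^ (1-q)) ^ (1/(1-q)) :=
        Real.rpow_le_rpow (le_max_left _ _) h1 (by rw [one_div]; exact inv_nonneg.2 (by linarith))
    _ = A := by
        rw [← Real.rpow_mul hA0.le, mul_one_div, div_self (by linarith), Real.rpow_one]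

lemma hbar_zero (hq1 : q < 1) (hA0 : 0 < A) : hbar q A b 0 = A := by
  unfold hbar
  rw [mul_zero, sub_zero, max_eq_right (Real.rpow_nonneg hA0.le _), ← Real.rpow_mul hA0.le]
  rw [mul_one_div, div_self (by linarith), Real.rpow_one]

lemma hbar_eq_zero (hq1 : q < 1) (hb : 0 < b) {t : ℝ} (ht : A ^ (1-q) / b ≤ t) :
    hbar q A b t = 0 := by
  unfold hbar
  have h : A ^ (1-q) - b * t ≤ 0 := by
    rw [div_le_iff₀ hb] at ht; linarith
  rw [max_eq_left h, Real.zero_rpow]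
  rw [one_div]
  exact ne_of_gt (inv_pos.2 (by linarith))

lemma hbar_continuous (hq1 : q < 1) : Continuous (hbar q A b) := by
  rw [continuous_iff_continuousAt]
  intro t
  have hc : Continuous (fun t : ℝ => max 0 (A ^ (1-q) - b * t)) :=
    continuous_const.max (continuous_const.sub (continuous_const.mul continuous_id))
  exact hc.continuousAt.rpow_const (Or.inr (by rw [one_div]; exact inv_nonneg.2 (by linarith)))

lemma hbar_hasDerivAt {q A b : ℝ} (hq0 : 0 < q) (hq1 : q < 1) (hA0 : 0 < A) (hb : 0 < b)
    (t : ℝ) : HasDerivAt (hbar q A b) (-(b/(1-q)) * (hbar q A b t) ^ q) t := by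
  have h1q : 0 < 1 - q := by linarith
  set m := 1/(1-q) with hm
  have hmpos : 0 < m := by rw [hm, one_div]; exact inv_pos.2 h1q
  have hm1 : 1 < m := by rw [hm, lt_div_iff₀ h1q]; linarith
  set T₀ := A^(1-q)/b with hT₀
  have hWb : ∀ s : ℝ, A^(1-q) - b*s = b * (T₀ - s) := by
    intro s; rw [hT₀]; field_simp
  have hmq : m * q = m - 1 := by rw [hm]; field_simp; ring
  rcases lt_trichotomy t T₀ with hlt | heq | hgt
  · -- t < T₀
    have hWpos : 0 < A^(1-q) - b*t := by rw [hWb]; exact mul_pos hb (by linarith)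
    have hWcont : Continuous (fun s : ℝ => A^(1-q) - b*s) :=
      continuous_const.sub (continuous_const.mul continuous_id)
    have hev : ∀ᶠ s in 𝓝 t, hbar q A b s = (A^(1-q) - b*s) ^ m := by
      have hpos : ∀ᶠ s in 𝓝 t, 0 < A^(1-q) - b*s :=
        (hWcont.continuousAt).eventually (eventually_gt_nhds hWpos)
      filter_upwards [hpos] with s hs
      unfold hbar
      rw [max_eq_right hs.le]
    have hW' : HasDerivAt (fun s : ℝ => A^(1-q) - b*s) (-b) t := by
      simpa using ((hasDerivAt_id t).const_mul b).const_sub (A^(1-q))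
    have hrp : HasDerivAt (fun x : ℝ => x ^ m) (m * (A^(1-q) - b*t) ^ (m-1)) (A^(1-q) - b*t) :=
      Real.hasDerivAt_rpow_const (Or.inl hWpos.ne')
    have hcomp : HasDerivAt (fun s => (A^(1-q) - b*s) ^ m)
        (m * (A^(1-q) - b*t) ^ (m-1) * (-b)) t := hrp.comp (h := fun s : ℝ => A^(1-q) - b*s) t hW'
    have hmain := hcomp.congr_of_eventuallyEq hev
    refine hmain.congr_deriv ?_
    have h1 : hbar q A b t = (A^(1-q) - b*t) ^ m := by
      unfold hbar; rw [max_eq_right hWpos.le]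
    rw [h1, ← Real.rpow_mul hWpos.le, hmq]
    have hbm : b/(1-q) = m * b := by rw [hm]; ring
    rw [hbm]; ring
  · -- t = T₀
    have hbT : hbar q A b t = 0 := hbar_eq_zero hq1 hb (le_of_eq heq.symm)
    rw [hbT, Real.zero_rpow hq0.ne', mul_zero]
    rw [hasDerivAt_iff_tendsto_slope]
    have hbound : ∀ s : ℝ, ‖slope (hbar q A b) t s‖ ≤ b^m * |s - t| ^ (m-1) := by
      intro s
      rcases le_or_gt t s with hs | hs
      · have : hbar q A b s = 0 := hbar_eq_zero hq1 hb (show A^(1-q)/b ≤ s by rw [← hT₀, ← heq]; exact hs)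
        rw [slope_def_field, this, hbT, sub_self, zero_div, norm_zero]
        positivity
      · have hWpos : (0:ℝ) < b * (t - s) := mul_pos hb (by linarith)
        have h1 : hbar q A b s = (b * (t - s)) ^ m := by
          unfold hbar
          rw [heq, ← hT₀] at *
          rw [hWb s, max_eq_right (by nlinarith : (0:ℝ) ≤ b * (T₀ - s))]
        rw [slope_def_field, h1, hbT, sub_zero]
        rw [Real.mul_rpow hb.le (by linarith : (0:ℝ) ≤ t - s)]
        rw [norm_div, norm_mul]
        have h2 : ‖(t - s) ^ m‖ = (t-s)^m := Real.norm_of_nonneg (Real.rpow_nonneg (by linarith) _)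
        have h3 : ‖s - t‖ = t - s := by rw [Real.norm_eq_abs, abs_of_neg (by linarith)]; ring
        have h4 : ‖b^m‖ = b^m := Real.norm_of_nonneg (Real.rpow_nonneg hb.le _)
        rw [h2, h3, h4, mul_div_assoc]
        have h5 : (t-s)^m / (t-s) = (t-s)^(m-1) := by
          rw [Real.rpow_sub (by linarith), Real.rpow_one]
        rw [h5]
        have : |s - t| = t - s := by rw [abs_of_neg (by linarith)]; ring
        rw [this]
    apply squeeze_zero_norm hbound
    have hcont : ContinuousAt (fun s : ℝ => b^m * |s - t| ^ (m-1)) t := by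
      apply ContinuousAt.mul continuousAt_const
      exact ((continuous_abs.comp (continuous_id.sub continuous_const)).continuousAt).rpow_const
        (Or.inr (by linarith))
    have h2 := hcont.tendsto
    simp only [sub_self, abs_zero] at h2
    rw [Real.zero_rpow (show m - 1 ≠ 0 from ne_of_gt (by linarith)), mul_zero] at h2
    exact h2.mono_left nhdsWithin_le_nhds
  · -- T₀ < t
    have hev : ∀ᶠ s in 𝓝 t, hbar q A b s = 0 := by
      have : ∀ᶠ s in 𝓝 t, T₀ < s := eventually_gt_nhds hgt
      filter_upwards [this] with s hs
      exact hbar_eq_zero hq1 hb hs.le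
    have hbT : hbar q A b t = 0 := hbar_eq_zero hq1 hb hgt.le
    rw [hbT, Real.zero_rpow hq0.ne', mul_zero]
    exact (hasDerivAt_const t 0).congr_of_eventuallyEq hev

-- F(U) - F(H) ≤ L (U - H), F x = x^p - x^q
lemma nonlin_lip {p q B H U : ℝ} (hp : 1 < p) (hq0 : 0 < q) (hB : 1 ≤ B)
    (hH : 0 ≤ H) (hHU : H < U) (hU : U ≤ B) :
    (U^p - U^q) - (H^p - H^q) ≤ (p * B^(p-1)) * (U - H) := by
  have hq : H^q ≤ U^q := Real.rpow_le_rpow hH hHU.le hq0.le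
  have hmvt : U^p - H^p ≤ (p * B^(p-1)) * (U - H) := by
    obtain ⟨ξ, hξ, hslope⟩ := exists_hasDerivAt_eq_slope (fun x => x^p)
      (fun x => p * x^(p-1)) hHU
      (by
        have : Continuous (fun x : ℝ => x^p) := by
          rw [continuous_iff_continuousAt]
          intro x
          exact Real.continuousAt_rpow_const x p (Or.inr (by linarith))
        exact this.continuousOn)
      (fun x _ => Real.hasDerivAt_rpow_const (Or.inr hp.le))
    have hξ0 : 0 ≤ ξ := le_trans hH hξ.1.le
    have hξB : ξ ≤ B := le_trans hξ.2.le hU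
    have hd : p * ξ^(p-1) ≤ p * B^(p-1) := by
      have := Real.rpow_le_rpow hξ0 hξB (by linarith : (0:ℝ) ≤ p - 1)
      nlinarith
    have hne : U - H > 0 := by linarith
    have heq : U^p - H^p = (p * ξ^(p-1)) * (U - H) := by
      rw [hslope]; field_simp
    rw [heq]
    nlinarith
  linarith

-- supersolution: H^p - H^q ≤ -(1 - A^(p-q)) * H^q for 0 ≤ H ≤ A
lemma nonlin_supersol {p q A H : ℝ} (hp : 1 < p) (hq0 : 0 < q) (hq1 : q < 1)
    (hA0 : 0 < A) (hH : 0 ≤ H) (hHA : H ≤ A) :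
    H^p - H^q ≤ -(1 - A^(p-q)) * H^q := by
  rcases eq_or_lt_of_le hH with h0 | h0
  · rw [← h0, Real.zero_rpow (by linarith : p ≠ 0), Real.zero_rpow hq0.ne']
    simp
  · have h1 : H^p = H^q * H^(p-q) := by
      rw [← Real.rpow_add h0]; ring_nf
    have h2 : H^(p-q) ≤ A^(p-q) := Real.rpow_le_rpow hH hHA (by linarith)
    have h3 : 0 ≤ H^q := Real.rpow_nonneg hH _
    nlinarith

-- |v|^(p-1) v - |v|^(q-1) v = v^p - v^q for v > 0
lemma nonlin_pos {p q v : ℝ} (hv : 0 < v) :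
    |v|^(p-1) * v - |v|^(q-1) * v = v^p - v^q := by
  rw [abs_of_pos hv]
  have h1 : v^(p-1) * v = v^p := by
    rw [← Real.rpow_add_one hv.ne' (p-1)]; ring_nf
  have h2 : v^(q-1) * v = v^q := by
    rw [← Real.rpow_add_one hv.ne' (q-1)]; ring_nf
  rw [h1, h2]

-- time derivative nonneg at a max approached from the left
lemma deriv_nonneg_of_isMaxOn {g : ℝ → ℝ} {d t₀ T' : ℝ} (h : HasDerivAt g d t₀)
    (h0 : 0 < t₀) (hT : t₀ ≤ T') (hmax : ∀ t ∈ Icc (0:ℝ) T', g t ≤ g t₀) : 0 ≤ d := by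
  have hslope : Tendsto (slope g t₀) (𝓝[<] t₀) (𝓝 d) :=
    (hasDerivAt_iff_tendsto_slope.1 h).mono_left
      (nhdsWithin_mono _ fun s hs => ne_of_lt hs)
  refine ge_of_tendsto hslope ?_
  have hmem : Ioo (0:ℝ) t₀ ∈ 𝓝[<] t₀ := Ioo_mem_nhdsLT_of_mem ⟨h0, le_rfl⟩
  filter_upwards [hmem] with s hs
  rw [slope_def_field]
  have h1 : g s ≤ g t₀ := hmax s ⟨hs.1.le, le_trans hs.2.le hT⟩
  have h2 : s - t₀ < 0 := by linarith [hs.2]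
  exact div_nonneg_of_nonpos (by linarith) h2.le

set_option maxHeartbeats 1000000 in
lemma comparison_upper {n : ℕ} {p q A : ℝ}
    (hp : 1 < p) (hq0 : 0 < q) (hq1 : q < 1) (hA0 : 0 < A) (hA1 : A < 1)
    (v : EuclideanSpace ℝ (Fin n) → ℝ → ℝ) (M : ℝ)
    (hM : ∀ x, ∀ t : ℝ, 0 ≤ t → |v x t| ≤ M)
    (hcont : ContinuousOn (fun z : EuclideanSpace ℝ (Fin n) × ℝ => v z.1 z.2) {z | 0 ≤ z.2})
    (hreg : ∀ t : ℝ, 0 < t → ContDiff ℝ 2 (fun x => v x t))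
    (hpde : ∀ x, ∀ t : ℝ, 0 < t → HasDerivAt (fun s => v x s)
      (laplacian (fun y => v y t) x + |v x t| ^ (p-1) * v x t - |v x t| ^ (q-1) * v x t) t)
    (hinit : ∀ x, v x 0 ≤ A) :
    ∀ x₁, ∀ t₁ : ℝ, 0 ≤ t₁ → ∀ ε : ℝ, 0 < ε →
      v x₁ t₁ ≤ hbar q A ((1-q)*(1-A^(p-q))) t₁
        + ε * Real.exp ((p * (max M 1)^(p-1) + 2*n + 1) * t₁) * (1 + ‖x₁‖^2) := by
  intro x₁ t₁ ht₁ ε hε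
  set B := max M 1 with hBdef
  set L := p * B^(p-1) with hLdef
  set c := 1 - A^(p-q) with hcdef
  set b := (1-q)*c with hbdef
  set h := hbar q A b with hhdef
  have hc0 : 0 < c := by
    have : A^(p-q) < 1 := Real.rpow_lt_one hA0.le hA1 (by linarith)
    rw [hcdef]; linarith
  have hb0 : 0 < b := mul_pos (by linarith) hc0
  have hM0 : 0 ≤ M := le_trans (abs_nonneg _) (hM 0 0 le_rfl)
  have hB1 : (1:ℝ) ≤ B := le_max_right _ _
  have hB0 : (0:ℝ) < B := lt_of_lt_of_le one_pos hB1
  have hL0 : 0 < L := mul_pos (by linarith) (Real.rpow_pos_of_pos hB0 _)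
  by_contra hcon
  push_neg at hcon
  set T' := t₁ with hT'def
  set Φ : EuclideanSpace ℝ (Fin n) × ℝ → ℝ := fun z =>
    Real.exp (-(2*L)*z.2) * (v z.1 z.2 - h z.2 - ε * Real.exp ((L+2*n+1)*z.2) * (1 + ‖z.1‖^2))
      with hΦdef
  set S : Set (EuclideanSpace ℝ (Fin n) × ℝ) := {z | 0 ≤ z.2 ∧ z.2 ≤ T'} with hSdef
  have hz₁S : (x₁, t₁) ∈ S := ⟨ht₁, le_rfl⟩
  have hz₁pos : 0 < Φ (x₁, t₁) := by
    apply mul_pos (Real.exp_pos _)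
    simp only []
    linarith
  have hSsub : S ⊆ {z : EuclideanSpace ℝ (Fin n) × ℝ | 0 ≤ z.2} := fun z hz => hz.1
  have hΦc : ContinuousOn Φ S := by
    apply ContinuousOn.mul
    · exact (Real.continuous_exp.comp (continuous_const.mul continuous_snd)).continuousOn
    · exact ((hcont.mono hSsub).sub
        (((hbar_continuous hq1).comp continuous_snd).continuousOn)).sub
        (((continuous_const.mul (Real.continuous_exp.comp
            (continuous_const.mul continuous_snd))).mul
          (continuous_const.add ((continuous_fst.norm.pow 2)))).continuousOn)
  have hSclosed : IsClosed S :=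
    IsClosed.inter (isClosed_le continuous_const continuous_snd)
      (isClosed_le continuous_snd continuous_const)
  set K := S ∩ Φ ⁻¹' (Ici (Φ (x₁,t₁))) with hKdef
  have hKclosed : IsClosed K := hΦc.preimage_isClosed_of_isClosed hSclosed isClosed_Ici
  have hKbdd : Bornology.IsBounded K := by
    have hsub : K ⊆ (Metric.closedBall (0:EuclideanSpace ℝ (Fin n)) (Real.sqrt (M/ε))) ×ˢ
        (Icc (0:ℝ) T') := by
      rintro ⟨x, t⟩ ⟨⟨ht0, htT⟩, hΦz⟩
      have hΦzpos : 0 < Φ (x, t) := lt_of_lt_of_le hz₁pos hΦz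
      have hX : 0 < v x t - h t - ε * Real.exp ((L+2*n+1)*t) * (1 + ‖x‖^2) := by
        by_contra hX
        push_neg at hX
        have h2 := mul_nonpos_of_nonneg_of_nonpos (Real.exp_pos (-(2*L)*t)).le hX
        simp only [hΦdef] at hΦzpos
        linarith
      have hexp1 : (1:ℝ) ≤ Real.exp ((L+2*n+1)*t) := Real.one_le_exp (by positivity)
      have hvle : v x t ≤ M := le_trans (le_abs_self _) (hM x t ht0)
      have hh0 : 0 ≤ h t := hbar_nonneg t
      have hx2 : ε * (1 + ‖x‖^2) ≤ M := by nlinarith [sq_nonneg ‖x‖]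
      have hnx : ‖x‖^2 ≤ M/ε := by
        rw [le_div_iff₀ hε]; nlinarith
      constructor
      · simp only [Metric.mem_closedBall, dist_zero_right]
        calc ‖x‖ = Real.sqrt (‖x‖^2) := (Real.sqrt_sq (norm_nonneg _)).symm
          _ ≤ Real.sqrt (M/ε) := Real.sqrt_le_sqrt hnx
      · exact ⟨ht0, htT⟩
    exact (Bornology.IsBounded.prod Metric.isBounded_closedBall
      (Metric.isBounded_Icc 0 T')).subset hsub
  have hKcompact : IsCompact K := Metric.isCompact_of_isClosed_isBounded hKclosed hKbdd
  have hKne : (x₁,t₁) ∈ K := ⟨hz₁S, Set.mem_preimage.2 (Set.mem_Ici.2 le_rfl)⟩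
  obtain ⟨z₀, hz₀K, hz₀max⟩ := hKcompact.exists_isMaxOn ⟨(x₁,t₁), hKne⟩
    (hΦc.mono inter_subset_left)
  have hmaxS : ∀ z ∈ S, Φ z ≤ Φ z₀ := by
    intro z hz
    rcases le_or_gt (Φ (x₁,t₁)) (Φ z) with hge | hlt
    · exact hz₀max ⟨hz, hge⟩
    · exact le_trans hlt.le (hz₀max hKne)
  obtain ⟨x₀, t₀⟩ := z₀
  have hΦ₀pos : 0 < Φ (x₀,t₀) := lt_of_lt_of_le hz₁pos (hz₀max hKne)
  have ht₀0 : 0 ≤ t₀ := hz₀K.1.1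
  have ht₀T : t₀ ≤ T' := hz₀K.1.2
  have hEpos : 0 < Real.exp ((L+2*n+1)*t₀) := Real.exp_pos _
  have hEge1 : (1:ℝ) ≤ Real.exp ((L+2*n+1)*t₀) := Real.one_le_exp (by positivity)
  have hφ₀pos : 0 < v x₀ t₀ - h t₀ - ε * Real.exp ((L+2*n+1)*t₀) * (1 + ‖x₀‖^2) := by
    by_contra hneg
    push_neg at hneg
    have h2 := mul_nonpos_of_nonneg_of_nonpos (Real.exp_pos (-(2*L)*t₀)).le hneg
    simp only [hΦdef] at hΦ₀pos
    linarith
  have hH0 : 0 ≤ h t₀ := hbar_nonneg t₀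
  have hHA : h t₀ ≤ A := hbar_le hq1 hA0 hb0 ht₀0
  have hU0 : 0 < v x₀ t₀ := by
    nlinarith [mul_pos (mul_pos hε hEpos) (by positivity : (0:ℝ) < 1 + ‖x₀‖^2)]
  have hUB : v x₀ t₀ ≤ B := le_trans (le_trans (le_abs_self _) (hM x₀ t₀ ht₀0)) (le_max_left _ _)
  have ht₀pos : 0 < t₀ := by
    rcases eq_or_lt_of_le ht₀0 with h0 | h0
    · exfalso
      have hΦ00 : Φ (x₀, 0) ≤ 0 := by
        have h1 : h 0 = A := hbar_zero hq1 hA0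
        have h2 : v x₀ 0 ≤ A := hinit x₀
        have h3 : (0:ℝ) < 1 + ‖x₀‖^2 := by positivity
        have hexp1 : (1:ℝ) ≤ Real.exp ((L+2*(n:ℝ)+1)*0) := Real.one_le_exp (by positivity)
        have h4 : v x₀ 0 - h 0 - ε * Real.exp ((L+2*(n:ℝ)+1)*0) * (1 + ‖x₀‖^2) ≤ 0 := by
          have h5 : ε * 1 * (1 + ‖x₀‖^2) ≤ ε * Real.exp ((L+2*(n:ℝ)+1)*0) * (1 + ‖x₀‖^2) :=
            mul_le_mul_of_nonneg_right (by nlinarith) h3.le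
          nlinarith [mul_pos hε h3]
        simp only [hΦdef]
        exact mul_nonpos_of_nonneg_of_nonpos (Real.exp_pos _).le h4
      rw [← h0] at hΦ₀pos
      linarith
    · exact h0
  -- spatial part
  have hFmax : IsLocalMax (fun x => v x t₀ - (ε * Real.exp ((L+2*n+1)*t₀)) * ‖x‖^2) x₀ := by
    apply Filter.Eventually.of_forall
    intro x
    have hle := hmaxS (x, t₀) ⟨ht₀0, ht₀T⟩
    simp only [hΦdef] at hle
    have hepos := Real.exp_pos (-(2*L)*t₀)
    have hle2 := (mul_le_mul_iff_right₀ hepos).1 hle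
    dsimp only
    nlinarith [hle2]
  have hnsq : ContDiff ℝ 2 (fun x : EuclideanSpace ℝ (Fin n) => (ε * Real.exp ((L+2*n+1)*t₀)) * ‖x‖^2) :=
    contDiff_const.mul (contDiff_norm_sq ℝ)
  have hF2 : ContDiff ℝ 2 (fun x => v x t₀ - (ε * Real.exp ((L+2*n+1)*t₀)) * ‖x‖^2) :=
    (hreg t₀ ht₀pos).sub hnsq
  have hlapF := laplacian_nonpos_of_isLocalMax hF2 hFmax
  rw [laplacian_sub (hreg t₀ ht₀pos) hnsq,
    laplacian_const_mul (ε * Real.exp ((L+2*n+1)*t₀)) (contDiff_norm_sq ℝ),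
    laplacian_normSq] at hlapF
  -- time part
  have hv' := hpde x₀ t₀ ht₀pos
  have hh' := hbar_hasDerivAt hq0 hq1 hA0 hb0 t₀
  have hbc : b/(1-q) = c := by
    rw [hbdef, mul_comm]
    exact mul_div_cancel_right₀ c (by linarith : (1:ℝ)-q ≠ 0)
  rw [hbc] at hh'
  have hexpfun : HasDerivAt (fun t => Real.exp ((L+2*n+1)*t)) (Real.exp ((L+2*n+1)*t₀) * (L+2*n+1)) t₀ := by
    simpa using ((hasDerivAt_id t₀).const_mul (L+2*n+1)).exp
  have hψ' : HasDerivAt (fun t => ε * Real.exp ((L+2*n+1)*t) * (1 + ‖x₀‖^2))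
      (ε * (Real.exp ((L+2*n+1)*t₀) * (L+2*n+1)) * (1 + ‖x₀‖^2)) t₀ :=
    (hexpfun.const_mul ε).mul_const _
  have hinner : HasDerivAt (fun t => v x₀ t - h t - ε * Real.exp ((L+2*n+1)*t) * (1 + ‖x₀‖^2))
      ((laplacian (fun y => v y t₀) x₀ + |v x₀ t₀|^(p-1) * v x₀ t₀ - |v x₀ t₀|^(q-1) * v x₀ t₀)
        - (-c * (h t₀)^q) - ε * (Real.exp ((L+2*n+1)*t₀) * (L+2*n+1)) * (1 + ‖x₀‖^2)) t₀ :=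
    (hv'.sub hh').sub hψ'
  have houter : HasDerivAt (fun t => Real.exp (-(2*L)*t))
      (Real.exp (-(2*L)*t₀) * (-(2*L))) t₀ := by
    simpa using ((hasDerivAt_id t₀).const_mul (-(2*L))).exp
  have hg := houter.mul hinner
  have htmax : ∀ t ∈ Icc (0:ℝ) T', (fun t => Real.exp (-(2*L)*t) *
      (v x₀ t - h t - ε * Real.exp ((L+2*n+1)*t) * (1 + ‖x₀‖^2))) t
      ≤ (fun t => Real.exp (-(2*L)*t) *
      (v x₀ t - h t - ε * Real.exp ((L+2*n+1)*t) * (1 + ‖x₀‖^2))) t₀ := by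
    intro t ht
    exact hmaxS (x₀, t) ⟨ht.1, ht.2⟩
  have hD := deriv_nonneg_of_isMaxOn hg ht₀pos ht₀T htmax
  have hkey : 0 ≤ -(2*L) * (v x₀ t₀ - h t₀ - ε * Real.exp ((L+2*n+1)*t₀) * (1 + ‖x₀‖^2))
      + ((laplacian (fun y => v y t₀) x₀ + |v x₀ t₀|^(p-1) * v x₀ t₀
          - |v x₀ t₀|^(q-1) * v x₀ t₀)
        - (-c * (h t₀)^q) - ε * (Real.exp ((L+2*n+1)*t₀) * (L+2*n+1)) * (1 + ‖x₀‖^2)) := by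
    have hepos := Real.exp_pos (-(2*L)*t₀)
    by_contra hneg
    push_neg at hneg
    nlinarith [hD, hepos]
  have hnp := nonlin_pos (p := p) (q := q) hU0
  have hHU : h t₀ < v x₀ t₀ := by
    nlinarith [mul_pos (mul_pos hε hEpos) (by positivity : (0:ℝ) < 1 + ‖x₀‖^2)]
  have hlip := nonlin_lip hp hq0 hB1 hH0 hHU hUB
  have hsup := nonlin_supersol hp hq0 hq1 hA0 hH0 hHA
  rw [← hcdef] at hsup
  rw [← hLdef] at hlip
  nlinarith [hkey, hnp, hlip, hsup, hlapF, hφ₀pos,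
    mul_pos hL0 hφ₀pos,
    mul_nonneg (mul_nonneg (by positivity : (0:ℝ) ≤ (2*(n:ℝ)+1)*ε) hEpos.le) (sq_nonneg ‖x₀‖),
    mul_pos hε hEpos]

/-- Finite time extinction. Let `n ≥ 1`, `p > 1`, `q ∈ (0,1)`, `A ∈ (0,1)`.
If `u` is a bounded continuous function on `ℝⁿ × [0,∞)`, is `C^{2,1}` on `ℝⁿ × (0,∞)`
(for each `t > 0` the map `x ↦ u(x,t)` is `C²`, the second spatial derivatives are
continuous in `(x,t)`, and the time derivative exists and is given by the equation),
satisfies `∂_t u = Δu + |u|^{p−1}u − |u|^{q−1}u` on `ℝⁿ × (0,∞)` and `|u(·,0)| ≤ A`,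
then there is `T > 0` with `u(x,t) = 0` for all `x` and all `t ≥ T`. -/
theorem finite_time_extinction (n : ℕ) (hn : 1 ≤ n) (p q A : ℝ)
    (hp : 1 < p) (hq0 : 0 < q) (hq1 : q < 1) (hA0 : 0 < A) (hA1 : A < 1)
    (u : EuclideanSpace ℝ (Fin n) → ℝ → ℝ)
    (hbdd : ∃ M : ℝ, ∀ x, ∀ t : ℝ, 0 ≤ t → |u x t| ≤ M)
    (hcont : ContinuousOn (fun pt : EuclideanSpace ℝ (Fin n) × ℝ => u pt.1 pt.2)
      {pt | 0 ≤ pt.2})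
    (hreg : ∀ t : ℝ, 0 < t → ContDiff ℝ 2 (fun x => u x t))
    (hreg' : ContinuousOn (fun pt : EuclideanSpace ℝ (Fin n) × ℝ =>
      laplacian (fun y => u y pt.2) pt.1) {pt | 0 < pt.2})
    (hpde : ∀ x, ∀ t : ℝ, 0 < t →
      HasDerivAt (fun s => u x s)
        (laplacian (fun y => u y t) x + |u x t| ^ (p - 1) * u x t
          - |u x t| ^ (q - 1) * u x t) t)
    (hinit : ∀ x, |u x 0| ≤ A) :
    ∃ T : ℝ, 0 < T ∧ ∀ x, ∀ t : ℝ, T ≤ t → u x t = 0 := by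
  obtain ⟨M, hM⟩ := hbdd
  have hc0 : 0 < 1 - A^(p-q) := by
    have : A^(p-q) < 1 := Real.rpow_lt_one hA0.le hA1 (by linarith)
    linarith
  have hb0 : 0 < (1-q)*(1-A^(p-q)) := mul_pos (by linarith) hc0
  have hA1q : 0 < A^(1-q) := Real.rpow_pos_of_pos hA0 _
  refine ⟨A^(1-q) / ((1-q)*(1-A^(p-q))), div_pos hA1q hb0, ?_⟩
  intro x t hTt
  have ht0 : 0 ≤ t := le_trans (div_pos hA1q hb0).le hTt
  have h0 : hbar q A ((1-q)*(1-A^(p-q))) t = 0 := hbar_eq_zero hq1 hb0 hTt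
  set C := Real.exp ((p * (max M 1)^(p-1) + 2*n + 1) * t) * (1 + ‖x‖^2) with hCdef
  have hC : 0 < C := by positivity
  have hup := comparison_upper hp hq0 hq1 hA0 hA1 u M hM hcont hreg hpde
    (fun x => (abs_le.1 (hinit x)).2) x t ht0
  have hlow := comparison_upper hp hq0 hq1 hA0 hA1 (fun x t => -u x t) M
    (fun x t ht => by simpa [abs_neg] using hM x t ht)
    (hcont.neg)
    (fun t ht => (hreg t ht).neg)
    (fun x t ht => by
      have h := (hpde x t ht).neg
      refine h.congr_deriv ?_
      rw [laplacian_neg, abs_neg]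
      ring)
    (fun x => by have := (abs_le.1 (hinit x)).1; linarith)
    x t ht0
  simp only [h0, zero_add] at hup hlow
  have hle : u x t ≤ 0 := by
    by_contra hpos
    push_neg at hpos
    have h2 := hup (u x t / (2*C)) (by positivity)
    have h3 : u x t / (2*C) * Real.exp ((p * (max M 1)^(p-1) + 2*n + 1) * t) * (1 + ‖x‖^2)
        = u x t / 2 := by
      rw [mul_assoc, ← hCdef]
      field_simp
    rw [h3] at h2
    linarith
  have hge : -u x t ≤ 0 := by
    by_contra hpos
    push_neg at hpos
    have h2 := hlow (-u x t / (2*C)) (by positivity)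
    have h3 : -u x t / (2*C) * Real.exp ((p * (max M 1)^(p-1) + 2*n + 1) * t) * (1 + ‖x‖^2)
        = -u x t / 2 := by
      rw [mul_assoc, ← hCdef]
      field_simp
    rw [h3] at h2
    linarith
  linarith
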